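/- arXiv:2405.16479 — 5 statements merged into one kernel-verified Lean document; each statement's English description precedes it below -/
import Mathlib

section
/- Let n be a positive natural number and let x, y : Fin n → ℝ be vectors with 0 < x i ≤ 1 and 0 < y i ≤ 1 for every i. Then ∑ i, (x i − y i) * (Real.log (x i) − Real.log (y i)) ≥ ∑ i, (x i − y i)^2. -/
open Finset

private lemma key_half {a b : ℝ} (ha : 0 < a) (ha1 : a ≤ 1) (hb : 0 < b)
    (hab : b ≤ a) : (a - b) * (Real.log a - Real.log b) ≥ (a - b) ^ 2 := by
  have hlog : Real.log (b / a) ≤ b / a - 1 :=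
    Real.log_le_sub_one_of_pos (div_pos hb ha)
  rw [Real.log_div (ne_of_gt hb) (ne_of_gt ha)] at hlog
  have h1 : (a - b) / a ≤ Real.log a - Real.log b := by
    have : 1 - b / a ≤ Real.log a - Real.log b := by linarith
    calc (a - b) / a = 1 - b / a := by field_simp
    _ ≤ _ := this
  have h2 : a - b ≤ (a - b) / a := by
    rw [le_div_iff₀ ha]
    nlinarith
  have h3 : a - b ≤ Real.log a - Real.log b := le_trans h2 h1
  nlinarith

private lemma key {a b : ℝ} (ha : 0 < a) (ha1 : a ≤ 1) (hb : 0 < b) (hb1 : b ≤ 1) :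
    (a - b) * (Real.log a - Real.log b) ≥ (a - b) ^ 2 := by
  rcases le_total b a with h | h
  · exact key_half ha ha1 hb h
  · have := key_half hb hb1 ha h
    nlinarith

theorem stmt_0 (n : ℕ) (hn : 0 < n) (x y : Fin n → ℝ)
    (hx : ∀ i, 0 < x i ∧ x i ≤ 1) (hy : ∀ i, 0 < y i ∧ y i ≤ 1) :
    ∑ i, (x i - y i) * (Real.log (x i) - Real.log (y i)) ≥ ∑ i, (x i - y i) ^ 2 := by
  apply Finset.sum_le_sum
  intro i _
  exact key (hx i).1 (hx i).2 (hy i).1 (hy i).2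
end

section
/- Let n be a positive natural number, s : ℝ, and let Z ⊆ ℝⁿ (as EuclideanSpace ℝ (Fin n)) be a convex set contained in {z | (∀ i, 0 < z i ∧ z i ≤ 1) ∧ ∑ i, z i = s}. Let f : ℝⁿ → ℝ be differentiable with gradient ∇f Lipschitz with constant L ≥ 0, let h : ℝⁿ → ℝ be convex and differentiable on an open set containing Z, and let β > 0. Suppose z₀ ∈ Z and z₁ ∈ Z minimizes over Z the function G(z) = ⟪∇f(z₀), z⟫ + h(z) + (1/β) * D(z, z₀), where D(x, y) = ∑ i, x i * (Real.log (x i) − Real.log (y i)). Then f(z₁) + h(z₁) ≤ f(z₀) + h(z₀) − (1/β − L/2) * ‖z₁ − z₀‖². -/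
open Finset intervalIntegral

lemma kl_pt {a b : ℝ} (ha : 0 < a) (ha1 : a ≤ 1) (hb : 0 < b) (hb1 : b ≤ 1) :
    (a - b) ^ 2 ≤ (a - b) * (Real.log a - Real.log b) := by
  have h1 : Real.log a - Real.log b ≤ a / b - 1 := by
    have := Real.log_le_sub_one_of_pos (div_pos ha hb)
    rwa [Real.log_div ha.ne' hb.ne'] at this
  have h2 : Real.log b - Real.log a ≤ b / a - 1 := by
    have := Real.log_le_sub_one_of_pos (div_pos hb ha)
    rwa [Real.log_div hb.ne' ha.ne'] at this
  have e1 : b * (a / b - 1) = a - b := by field_simp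
  have e2 : a * (b / a - 1) = b - a := by field_simp
  have h1' : b * (Real.log a - Real.log b) ≤ a - b := by
    have := mul_le_mul_of_nonneg_left h1 hb.le
    linarith [e1 ▸ this]
  have h2' : a * (Real.log b - Real.log a) ≤ b - a := by
    have := mul_le_mul_of_nonneg_left h2 ha.le
    linarith [e2 ▸ this]
  rcases le_total b a with hba | hab
  · have hd : 0 ≤ Real.log a - Real.log b := by
      have := Real.log_le_log hb hba
      linarith
    nlinarith [h2', hd, ha1]
  · have hd : Real.log a - Real.log b ≤ 0 := by
      have := Real.log_le_log ha hab
      linarith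
    nlinarith [h1', hd, hb1]

lemma descent {n : ℕ} (f : EuclideanSpace ℝ (Fin n) → ℝ) {L : ℝ} (hL : 0 ≤ L)
    (hf : Differentiable ℝ f) (hfL : LipschitzWith L.toNNReal (gradient f))
    (x y : EuclideanSpace ℝ (Fin n)) :
    f y ≤ f x + inner ℝ (gradient f x) (y - x) + L / 2 * ‖y - x‖ ^ 2 := by
  set v := y - x with hv
  have hγ : ∀ t : ℝ, HasDerivAt (fun t : ℝ => x + t • v) v t := by
    intro t
    simpa using ((hasDerivAt_id t).smul_const v).const_add x
  have key : ∀ t : ℝ, HasDerivAt (fun t : ℝ => f (x + t • v))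
      (inner ℝ (gradient f (x + t • v)) v) t := by
    intro t
    have h1 := (hf (x + t • v)).hasFDerivAt.comp_hasDerivAt t (hγ t)
    have h2 : fderiv ℝ f (x + t • v) v = inner ℝ (gradient f (x + t • v)) v := by
      rw [gradient, InnerProductSpace.toDual_symm_apply]
    rw [← h2]; exact h1
  have hγc : Continuous (fun t : ℝ => x + t • v) :=
    continuous_const.add ((continuous_id).smul continuous_const)
  have hgc : Continuous (gradient f) := hfL.continuous
  have hic : Continuous fun t : ℝ => (inner ℝ (gradient f (x + t • v)) v : ℝ) :=
    (hgc.comp hγc).inner continuous_const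
  have hfs : f y - f x = ∫ t in (0:ℝ)..1, (inner ℝ (gradient f (x + t • v)) v : ℝ) := by
    have := (intervalIntegral.integral_eq_sub_of_hasDerivAt
      (fun t (_ : t ∈ Set.uIcc (0:ℝ) 1) => key t) (hic.intervalIntegrable 0 1))
    simpa [hv] using this.symm
  have hbound : ∀ t ∈ Set.Icc (0:ℝ) 1,
      (inner ℝ (gradient f (x + t • v)) v : ℝ)
        ≤ inner ℝ (gradient f x) v + L * ‖v‖ ^ 2 * t := by
    intro t ht
    have hsplit : (inner ℝ (gradient f (x + t • v)) v : ℝ)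
        = inner ℝ (gradient f x) v + inner ℝ (gradient f (x + t • v) - gradient f x) v := by
      rw [inner_sub_left]; ring
    rw [hsplit]
    have hcs := real_inner_le_norm (gradient f (x + t • v) - gradient f x) v
    have h0 := hfL.dist_le_mul (x + t • v) x
    simp only [dist_eq_norm] at h0
    have h3 : ‖x + t • v - x‖ = t * ‖v‖ := by
      rw [add_sub_cancel_left, norm_smul, Real.norm_eq_abs, abs_of_nonneg ht.1]
    rw [h3, Real.coe_toNNReal L hL] at h0
    have : (inner ℝ (gradient f (x + t • v) - gradient f x) v : ℝ) ≤ L * (t * ‖v‖) * ‖v‖ :=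
      hcs.trans (mul_le_mul_of_nonneg_right h0 (norm_nonneg v))
    nlinarith [this]
  have hcont2 : Continuous fun t : ℝ => (inner ℝ (gradient f x) v : ℝ) + L * ‖v‖ ^ 2 * t :=
    continuous_const.add (continuous_const.mul continuous_id)
  have hintle : (∫ t in (0:ℝ)..1, (inner ℝ (gradient f (x + t • v)) v : ℝ))
      ≤ ∫ t in (0:ℝ)..1, ((inner ℝ (gradient f x) v : ℝ) + L * ‖v‖ ^ 2 * t) :=
    intervalIntegral.integral_mono_on zero_le_one (hic.intervalIntegrable 0 1)
      (hcont2.intervalIntegrable 0 1) hbound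
  have hval : (∫ t in (0:ℝ)..1, ((inner ℝ (gradient f x) v : ℝ) + L * ‖v‖ ^ 2 * t))
      = inner ℝ (gradient f x) v + L / 2 * ‖v‖ ^ 2 := by
    rw [intervalIntegral.integral_add intervalIntegrable_const
      ((by fun_prop : Continuous fun t : ℝ => L * ‖v‖ ^ 2 * t).intervalIntegrable 0 1)]
    rw [integral_const_mul, integral_id, integral_const]
    simp
    ring
  have : f y - f x ≤ inner ℝ (gradient f x) v + L / 2 * ‖v‖ ^ 2 := by
    rw [hfs]; exact hintle.trans (le_of_eq hval)
  linarith
theorem stmt_1 (n : ℕ) (hn : 0 < n) (s : ℝ)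
    (Z : Set (EuclideanSpace ℝ (Fin n))) (hZconv : Convex ℝ Z)
    (hZsub : Z ⊆ {z : EuclideanSpace ℝ (Fin n) | (∀ i, 0 < z i ∧ z i ≤ 1) ∧ ∑ i, z i = s})
    (f h : EuclideanSpace ℝ (Fin n) → ℝ)
    (L : ℝ) (hL : 0 ≤ L)
    (hf : Differentiable ℝ f)
    (hfL : LipschitzWith L.toNNReal (gradient f))
    (U : Set (EuclideanSpace ℝ (Fin n))) (hU : IsOpen U) (hZU : Z ⊆ U)
    (hh : DifferentiableOn ℝ h U)
    (hhconv : ConvexOn ℝ Set.univ h)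
    (β : ℝ) (hβ : 0 < β)
    (D : EuclideanSpace ℝ (Fin n) → EuclideanSpace ℝ (Fin n) → ℝ)
    (hD : ∀ x y, D x y = ∑ i, x i * (Real.log (x i) - Real.log (y i)))
    (z₀ z₁ : EuclideanSpace ℝ (Fin n)) (hz₀ : z₀ ∈ Z) (hz₁ : z₁ ∈ Z)
    (hmin : ∀ w ∈ Z,
      inner ℝ (gradient f z₀) z₁ + h z₁ + (1 / β) * D z₁ z₀ ≤
        (inner ℝ (gradient f z₀) w + h w + (1 / β) * D w z₀ : ℝ)) :
    f z₁ + h z₁ ≤ f z₀ + h z₀ - (1 / β - L / 2) * ‖z₁ - z₀‖ ^ 2 := by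
  obtain ⟨hz₀p, hz₀s⟩ := hZsub hz₀
  obtain ⟨hz₁p, hz₁s⟩ := hZsub hz₁
  set g := gradient f z₀ with hg
  -- the one-dimensional KL function along the segment
  set φ : ℝ → ℝ := fun t => ∑ i, ((1 - t) * z₁ i + t * z₀ i) *
    (Real.log ((1 - t) * z₁ i + t * z₀ i) - Real.log (z₀ i)) with hφ
  have hsumsq : ‖z₁ - z₀‖ ^ 2 = ∑ i, (z₁ i - z₀ i) ^ 2 := by
    rw [EuclideanSpace.norm_eq, Real.sq_sqrt (by positivity)]
    congr 1; ext i
    simp [sq_abs]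
  -- derivative of φ at 0
  set c : ℝ := ∑ i, ((z₀ i - z₁ i) * (Real.log (z₁ i) - Real.log (z₀ i)) + (z₀ i - z₁ i))
    with hc
  have hφd : HasDerivAt φ c 0 := by
    rw [hφ, hc]
    apply HasDerivAt.fun_sum
    intro i _
    have hu : HasDerivAt (fun t : ℝ => (1 - t) * z₁ i + t * z₀ i) (z₀ i - z₁ i) 0 := by
      have := (((hasDerivAt_const (0:ℝ) (1:ℝ)).sub (hasDerivAt_id 0)).mul_const (z₁ i)).add
        ((hasDerivAt_id (0:ℝ)).mul_const (z₀ i))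
      exact this.congr_deriv (by ring)
    have hu0 : (1 - (0:ℝ)) * z₁ i + 0 * z₀ i = z₁ i := by ring
    have hne : (1 - (0:ℝ)) * z₁ i + 0 * z₀ i ≠ 0 := by rw [hu0]; exact (hz₁p i).1.ne'
    have hlog : HasDerivAt (fun t : ℝ =>
        Real.log ((1 - t) * z₁ i + t * z₀ i) - Real.log (z₀ i))
        ((z₀ i - z₁ i) / ((1 - (0:ℝ)) * z₁ i + 0 * z₀ i)) 0 :=
      (hu.log hne).sub_const _
    have := hu.mul hlog
    refine this.congr_deriv ?_
    rw [hu0]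
    rw [← mul_div_assoc, mul_div_cancel_left₀ _ (hz₁p i).1.ne']
  -- φ 0 = D z₁ z₀
  have hφ0 : φ 0 = D z₁ z₀ := by
    rw [hφ, hD]; simp
  -- slope inequality from hmin + convexity of h, for t ∈ (0,1]
  set A : ℝ := inner ℝ g z₁ + h z₁ - inner ℝ g z₀ - h z₀ with hA
  have hslope : ∀ t ∈ Set.Ioc (0:ℝ) 1, A ≤ (1 / β) * ((φ t - φ 0) / t) := by
    intro t ht
    have ht0 : 0 < t := ht.1
    have ht1 : t ≤ 1 := ht.2
    set w : EuclideanSpace ℝ (Fin n) := (1 - t) • z₁ + t • z₀ with hw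
    have hwZ : w ∈ Z := hZconv hz₁ hz₀ (by linarith) ht0.le (by ring)
    have hDw : D w z₀ = φ t := by
      rw [hD, hφ]
      apply Finset.sum_congr rfl
      intro i _
      have : w i = (1 - t) * z₁ i + t * z₀ i := by
        simp [hw, smul_eq_mul]
      rw [this]
    have hinnw : (inner ℝ g w : ℝ) = (1 - t) * inner ℝ g z₁ + t * inner ℝ g z₀ := by
      rw [hw, inner_add_right, real_inner_smul_right, real_inner_smul_right]
    have hhw : h w ≤ (1 - t) * h z₁ + t * h z₀ :=
      hhconv.2 (Set.mem_univ z₁) (Set.mem_univ z₀) (by linarith) ht0.le (by ring)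
    have hm := hmin w hwZ
    rw [hDw, hinnw] at hm
    have key : t * A ≤ (1 / β) * (φ t - φ 0) := by
      rw [hφ0] at *
      nlinarith [hm, hhw]
    calc A = t * A / t := (mul_div_cancel_left₀ A ht0.ne').symm
      _ ≤ (1 / β) * (φ t - φ 0) / t := (div_le_div_iff_of_pos_right ht0).mpr key
      _ = (1 / β) * ((φ t - φ 0) / t) := by ring
  -- pass to the limit t → 0⁺
  have htend : Filter.Tendsto (fun t => (1 / β) * ((φ t - φ 0) / t))
      (nhdsWithin 0 (Set.Ioi 0)) (nhds ((1 / β) * c)) := by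
    have h1 : Filter.Tendsto (slope φ 0) (nhdsWithin 0 {(0:ℝ)}ᶜ) (nhds c) :=
      hasDerivAt_iff_tendsto_slope.mp hφd
    have h2 : Filter.Tendsto (slope φ 0) (nhdsWithin 0 (Set.Ioi 0)) (nhds c) :=
      h1.mono_left (nhdsWithin_mono _ (fun x hx => ne_of_gt hx))
    have h3 : (fun t => (φ t - φ 0) / t) =ᶠ[nhdsWithin 0 (Set.Ioi 0)] slope φ 0 := by
      filter_upwards with t
      simp [slope_def_field]
    exact (Filter.Tendsto.const_mul _ (h2.congr' h3.symm))
  have hAle : A ≤ (1 / β) * c := by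
    refine ge_of_tendsto htend ?_
    filter_upwards [Ioc_mem_nhdsGT_of_mem (Set.left_mem_Ico.mpr zero_lt_one)] with t ht
    exact hslope t ht
  -- bound c
  have hcle : c ≤ -‖z₁ - z₀‖ ^ 2 := by
    have hsum0 : ∑ i, (z₀ i - z₁ i) = 0 := by
      rw [Finset.sum_sub_distrib, hz₀s, hz₁s, sub_self]
    have : c = -∑ i, (z₁ i - z₀ i) * (Real.log (z₁ i) - Real.log (z₀ i)) := by
      rw [hc, Finset.sum_add_distrib, hsum0, add_zero, ← Finset.sum_neg_distrib]
      apply Finset.sum_congr rfl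
      intro i _; ring
    rw [this, hsumsq, neg_le_neg_iff]
    apply Finset.sum_le_sum
    intro i _
    exact kl_pt (hz₁p i).1 (hz₁p i).2 (hz₀p i).1 (hz₀p i).2
  -- combine with descent lemma
  have hdesc := descent f hL hf hfL z₀ z₁
  have hinns : (inner ℝ g (z₁ - z₀) : ℝ) = inner ℝ g z₁ - inner ℝ g z₀ := inner_sub_right _ _ _
  have hApos : A ≤ -(1 / β) * ‖z₁ - z₀‖ ^ 2 := by
    calc A ≤ (1 / β) * c := hAle
      _ ≤ (1 / β) * (-‖z₁ - z₀‖ ^ 2) := by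
          apply mul_le_mul_of_nonneg_left hcle (by positivity)
      _ = -(1 / β) * ‖z₁ - z₀‖ ^ 2 := by ring
  rw [hA] at hApos
  rw [hg] at *
  nlinarith [hdesc, hApos, hinns]
end

section
/- Let n be a positive natural number, s : ℝ, and let Z ⊆ ℝⁿ (as EuclideanSpace ℝ (Fin n)) be a convex set contained in {z | (∀ i, 0 < z i ∧ z i ≤ 1) ∧ ∑ i, z i = s}. Let f : ℝⁿ → ℝ be differentiable with gradient ∇f Lipschitz with constant L ≥ 0, let h : ℝⁿ → ℝ be convex and differentiable on an open set containing Z, and let β > 0 satisfy β < 2/L (taking this as β > 0 with L*β < 2). Suppose F = f + h is bounded below on Z by F⋆, and z : ℕ → Z is a sequence such that for every t, z (t+1) minimizes over Z the function G_t(w) = ⟪∇f(z t), w⟫ + h(w) + (1/β) * D(w, z t), where D(x, y) = ∑ i, x i * (Real.log (x i) − Real.log (y i)). Then for every T ≥ 1, (1/T) * ∑_{t=0}^{T−1} ‖z (t+1) − z t‖² ≤ (F(z 0) − F⋆) / (T * (1/β − L/2)). -/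
open Finset

section helpers

private lemma phi_hasDeriv (c : ℝ) {x : ℝ} (hx : 0 < x) :
    HasDerivAt (fun u : ℝ => u * Real.log u - u * Real.log c - (u - c) - (u - c)^2 / 2)
      (Real.log x - Real.log c - (x - c)) x := by
  have h1 : HasDerivAt (fun u : ℝ => u * Real.log u) (Real.log x + 1) x :=
    Real.hasDerivAt_mul_log hx.ne'
  have h2 : HasDerivAt (fun u : ℝ => u * Real.log c) (Real.log c) x := by
    simpa using (hasDerivAt_id x).mul_const (Real.log c)
  have h3 : HasDerivAt (fun u : ℝ => u - c) 1 x := (hasDerivAt_id x).sub_const c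
  have h4 : HasDerivAt (fun u : ℝ => (u - c)^2 / 2) (x - c) x := by
    have := (h3.pow 2).div_const 2
    simpa [mul_comm] using this
  have := ((h1.sub h2).sub h3).sub h4
  exact this.congr_deriv (by ring)

private lemma rho_mono : MonotoneOn (fun u : ℝ => Real.log u - u) (Set.Ioc (0:ℝ) 1) := by
  have hconv : Convex ℝ (Set.Ioc (0:ℝ) 1) := convex_Ioc 0 1
  have hint : interior (Set.Ioc (0:ℝ) 1) = Set.Ioo (0:ℝ) 1 := interior_Ioc
  apply monotoneOn_of_deriv_nonneg hconv
  · intro u hu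
    exact ((Real.continuousAt_log hu.1.ne').sub continuous_id.continuousAt).continuousWithinAt
  · rw [hint]
    intro u hu
    exact ((Real.differentiableAt_log hu.1.ne').sub differentiable_id.differentiableAt).differentiableWithinAt
  · rw [hint]
    intro u hu
    have hd : HasDerivAt (fun u : ℝ => Real.log u - u) (u⁻¹ - 1) u :=
      (Real.hasDerivAt_log hu.1.ne').sub (hasDerivAt_id u)
    rw [hd.deriv]
    have : (1:ℝ) ≤ u⁻¹ := (one_le_inv_iff₀).2 ⟨hu.1, hu.2.le⟩
    linarith

private lemma key1 {a c : ℝ} (ha : 0 < a) (ha1 : a ≤ 1) (hc : 0 < c) (hc1 : c ≤ 1) :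
    (a - c) + (a - c)^2 / 2 ≤ a * (Real.log a - Real.log c) := by
  set φ : ℝ → ℝ := fun u => u * Real.log u - u * Real.log c - (u - c) - (u - c)^2 / 2 with hφ
  have hφc : φ c = 0 := by simp [hφ]
  have hkey : 0 ≤ φ a := by
    rcases le_total c a with hca | hac
    · have hmono : MonotoneOn φ (Set.Icc c a) := by
        apply monotoneOn_of_deriv_nonneg (convex_Icc c a)
        · intro u hu
          exact ((phi_hasDeriv c (lt_of_lt_of_le hc hu.1)).continuousAt).continuousWithinAt
        · rw [interior_Icc]
          intro u hu
          exact ((phi_hasDeriv c (lt_of_lt_of_le hc hu.1.le)).differentiableAt).differentiableWithinAt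
        · rw [interior_Icc]
          intro u hu
          have hu0 : 0 < u := lt_of_lt_of_le hc hu.1.le
          rw [(phi_hasDeriv c hu0).deriv]
          have := rho_mono (Set.mem_Ioc.2 ⟨hc, hc1⟩)
            (Set.mem_Ioc.2 ⟨hu0, le_trans hu.2.le ha1⟩) hu.1.le
          simp only at this
          linarith
      have := hmono (Set.mem_Icc.2 ⟨le_refl c, hca⟩) (Set.mem_Icc.2 ⟨hca, le_refl a⟩) hca
      rw [hφc] at this; exact this
    · have hanti : AntitoneOn φ (Set.Icc a c) := by
        apply antitoneOn_of_deriv_nonpos (convex_Icc a c)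
        · intro u hu
          exact ((phi_hasDeriv c (lt_of_lt_of_le ha hu.1)).continuousAt).continuousWithinAt
        · rw [interior_Icc]
          intro u hu
          exact ((phi_hasDeriv c (lt_of_lt_of_le ha hu.1.le)).differentiableAt).differentiableWithinAt
        · rw [interior_Icc]
          intro u hu
          have hu0 : 0 < u := lt_of_lt_of_le ha hu.1.le
          rw [(phi_hasDeriv c hu0).deriv]
          have := rho_mono (Set.mem_Ioc.2 ⟨hu0, le_trans hu.2.le hc1⟩)
            (Set.mem_Ioc.2 ⟨hc, hc1⟩) hu.2.le
          simp only at this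
          linarith
      have := hanti (Set.mem_Icc.2 ⟨le_refl a, hac⟩) (Set.mem_Icc.2 ⟨hac, le_refl c⟩) hac
      rw [hφc] at this; exact this
  simp only [hφ] at hkey
  linarith

private lemma descent_lemma {n : ℕ} (f : EuclideanSpace ℝ (Fin n) → ℝ) (L : ℝ) (hL : 0 ≤ L)
    (hf : Differentiable ℝ f) (hfL : LipschitzWith L.toNNReal (gradient f))
    (x y : EuclideanSpace ℝ (Fin n)) :
    f x ≤ f y + inner ℝ (gradient f y) (x - y) + L / 2 * ‖x - y‖ ^ 2 := by
  set d := x - y with hd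
  set c : ℝ → EuclideanSpace ℝ (Fin n) := fun t => y + t • d with hc
  set g' : ℝ → ℝ := fun t => (inner ℝ (gradient f (c t)) d : ℝ) with hg'
  have hcderiv : ∀ t : ℝ, HasDerivAt c d t := by
    intro t
    have : HasDerivAt (fun t : ℝ => t • d) ((1:ℝ) • d) t := (hasDerivAt_id t).smul_const d
    exact (by simpa using this : HasDerivAt (fun t : ℝ => t • d) d t).const_add y
  have hgderiv : ∀ t : ℝ, HasDerivAt (fun t => f (c t)) (g' t) t := by
    intro t
    have hfd : HasFDerivAt f (InnerProductSpace.toDual ℝ _ (gradient f (c t))) (c t) := by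
      have := (hf (c t)).hasGradientAt
      rwa [hasGradientAt_iff_hasFDerivAt] at this
    have := hfd.comp_hasDerivAt t (hcderiv t)
    exact this.congr_deriv (by simp [hg', InnerProductSpace.toDual_apply_apply])
  have hgcont : Continuous g' := by
    have hgrad : Continuous (gradient f) := hfL.continuous
    have : Continuous c := by continuity
    exact (hgrad.comp this).inner continuous_const
  have hint : ∫ t in (0:ℝ)..1, g' t = f (c 1) - f (c 0) :=
    intervalIntegral.integral_eq_sub_of_hasDerivAt
      (fun t _ => hgderiv t) (hgcont.intervalIntegrable 0 1)
  have hc1 : c 1 = x := by simp [hc, hd]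
  have hc0 : c 0 = y := by simp [hc]
  have hbound : ∀ t ∈ Set.Icc (0:ℝ) 1, g' t ≤ g' 0 + L * ‖d‖^2 * t := by
    intro t ht
    have h1 : g' t - g' 0 = (inner ℝ (gradient f (c t) - gradient f (c 0)) d : ℝ) := by
      simp [hg', inner_sub_left]
    have h2 : (inner ℝ (gradient f (c t) - gradient f (c 0)) d : ℝ) ≤
        ‖gradient f (c t) - gradient f (c 0)‖ * ‖d‖ := real_inner_le_norm _ _
    have h3 : ‖gradient f (c t) - gradient f (c 0)‖ ≤ L * ‖c t - c 0‖ := by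
      have := hfL.dist_le_mul (c t) (c 0)
      rwa [dist_eq_norm, dist_eq_norm, Real.coe_toNNReal L hL] at this
    have h4 : ‖c t - c 0‖ = t * ‖d‖ := by
      have : c t - c 0 = t • d := by simp [hc]
      rw [this, norm_smul, Real.norm_eq_abs, abs_of_nonneg ht.1]
    have h5 := mul_le_mul_of_nonneg_right h3 (norm_nonneg d)
    rw [h4] at h5
    have h6 : L * (t * ‖d‖) * ‖d‖ = L * ‖d‖ ^ 2 * t := by ring
    rw [h6] at h5
    linarith
  have hintmono : ∫ t in (0:ℝ)..1, g' t ≤ ∫ t in (0:ℝ)..1, (g' 0 + L * ‖d‖^2 * t) := by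
    apply intervalIntegral.integral_mono_on (by norm_num)
      (hgcont.intervalIntegrable 0 1)
      ((continuous_const.add (continuous_const.mul continuous_id)).intervalIntegrable 0 1)
    exact hbound
  have hrhs : ∫ t in (0:ℝ)..1, (g' 0 + L * ‖d‖^2 * t) = g' 0 + L * ‖d‖^2 / 2 := by
    rw [intervalIntegral.integral_add (f := fun _ => g' 0) (g := fun t => L * ‖d‖^2 * t) (intervalIntegrable_const)
      ((continuous_const.mul continuous_id' : Continuous fun t : ℝ => L * ‖d‖^2 * t).intervalIntegrable 0 1)]
    rw [intervalIntegral.integral_const_mul, integral_id, intervalIntegral.integral_const]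
    norm_num
    ring
  have hg0 : g' 0 = (inner ℝ (gradient f y) (x - y) : ℝ) := by
    show (inner ℝ (gradient f (c 0)) d : ℝ) = _
    rw [hc0, hd]
  rw [hc1, hc0] at hint
  have : f x - f y ≤ g' 0 + L * ‖d‖^2 / 2 := by rw [← hint]; rw [hrhs] at hintmono; exact hintmono
  rw [hg0] at this
  simp only [hd] at this
  linarith

private lemma normsq {n : ℕ} (v : EuclideanSpace ℝ (Fin n)) : ‖v‖^2 = ∑ i, (v i)^2 := by
  rw [EuclideanSpace.norm_eq, Real.sq_sqrt (by positivity)]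
  simp [Real.norm_eq_abs, sq_abs]

end helpers

set_option maxHeartbeats 1000000 in
theorem stmt_2 (n : ℕ) (hn : 0 < n) (s : ℝ)
    (Z : Set (EuclideanSpace ℝ (Fin n))) (hZconv : Convex ℝ Z)
    (hZsub : Z ⊆ {z : EuclideanSpace ℝ (Fin n) | (∀ i, 0 < z i ∧ z i ≤ 1) ∧ ∑ i, z i = s})
    (f h : EuclideanSpace ℝ (Fin n) → ℝ)
    (L : ℝ) (hL : 0 ≤ L)
    (hf : Differentiable ℝ f)
    (hfL : LipschitzWith L.toNNReal (gradient f))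
    (U : Set (EuclideanSpace ℝ (Fin n))) (hU : IsOpen U) (hZU : Z ⊆ U)
    (hh : DifferentiableOn ℝ h U)
    (hhconv : ConvexOn ℝ Set.univ h)
    (β : ℝ) (hβ : 0 < β) (hβL : L * β < 2)
    (D : EuclideanSpace ℝ (Fin n) → EuclideanSpace ℝ (Fin n) → ℝ)
    (hD : ∀ x y, D x y = ∑ i, x i * (Real.log (x i) - Real.log (y i)))
    (Fstar : ℝ) (hFstar : ∀ w ∈ Z, Fstar ≤ f w + h w)
    (z : ℕ → EuclideanSpace ℝ (Fin n)) (hzZ : ∀ t, z t ∈ Z)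
    (hmin : ∀ t, ∀ w ∈ Z,
      inner ℝ (gradient f (z t)) (z (t + 1)) + h (z (t + 1)) + (1 / β) * D (z (t + 1)) (z t) ≤
        (inner ℝ (gradient f (z t)) w + h w + (1 / β) * D w (z t) : ℝ)) :
    ∀ T : ℕ, 1 ≤ T →
      (1 / (T : ℝ)) * ∑ t ∈ Finset.range T, ‖z (t + 1) - z t‖ ^ 2 ≤
        (f (z 0) + h (z 0) - Fstar) / ((T : ℝ) * (1 / β - L / 2)) := by
  have hc : 0 < 1 / β - L / 2 := by
    have : 1 / β - L / 2 = (2 - L * β) / (2 * β) := by field_simp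
    rw [this]
    exact div_pos (by linarith) (by linarith)
  -- per-step decrease
  have step : ∀ t : ℕ,
      f (z (t + 1)) + h (z (t + 1)) + (1 / β - L / 2) * ‖z (t + 1) - z t‖ ^ 2 ≤
        f (z t) + h (z t) := by
    intro t
    set x := z (t + 1) with hxdef
    set y := z t with hydef
    set G := gradient f y with hG
    obtain ⟨hx01, hxsum⟩ := hZsub (hzZ (t + 1))
    obtain ⟨hy01, hysum⟩ := hZsub (hzZ t)
    have hsubap : ∀ i, (x - y) i = x i - y i := fun i => rfl
    have hN : ‖x - y‖ ^ 2 = ∑ i, (x i - y i) ^ 2 := by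
      rw [normsq (x - y)]
      exact Finset.sum_congr rfl fun i _ => by rw [hsubap i]
    -- Pinsker-type inequality
    have pinsker : ‖x - y‖ ^ 2 / 2 ≤ D x y := by
      rw [hD, hN]
      have hterm : ∀ i ∈ Finset.univ (α := Fin n),
          (x i - y i) + (x i - y i) ^ 2 / 2 ≤ x i * (Real.log (x i) - Real.log (y i)) :=
        fun i _ => key1 (hx01 i).1 (hx01 i).2 (hy01 i).1 (hy01 i).2
      have := Finset.sum_le_sum hterm
      have hsplit : ∑ i, ((x i - y i) + (x i - y i) ^ 2 / 2) =
          (∑ i, x i - ∑ i, y i) + (∑ i, (x i - y i) ^ 2) / 2 := by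
        rw [Finset.sum_add_distrib, Finset.sum_div, Finset.sum_sub_distrib]
      rw [hsplit, hxsum, hysum] at this
      linarith
    -- strong convexity step for each lam in (0,1)
    have hlam : ∀ lam : ℝ, lam ∈ Set.Ioo (0:ℝ) 1 →
        (inner ℝ G x : ℝ) + h x + (1 / β) * D x y + (lam / (2 * β)) * ‖x - y‖ ^ 2 ≤
          (inner ℝ G y : ℝ) + h y := by
      intro lam ⟨hl0, hl1⟩
      have hl1' : 0 < 1 - lam := by linarith
      set w := lam • x + (1 - lam) • y with hwdef
      have hwZ : w ∈ Z := hZconv (hzZ (t + 1)) (hzZ t) hl0.le hl1'.le (by ring)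
      obtain ⟨hw01, _⟩ := hZsub hwZ
      have hwi : ∀ i, w i = lam * x i + (1 - lam) * y i := fun i => rfl
      -- strong convexity of D in first argument
      have hDw : D w y ≤ lam * D x y - (lam * (1 - lam) / 2) * ‖x - y‖ ^ 2 := by
        rw [hD, hD, hN, Finset.mul_sum, Finset.mul_sum, ← Finset.sum_sub_distrib]
        apply Finset.sum_le_sum
        intro i _
        have k1 := key1 (hx01 i).1 (hx01 i).2 (hw01 i).1 (hw01 i).2
        have k2 := key1 (hy01 i).1 (hy01 i).2 (hw01 i).1 (hw01 i).2
        have k1' := mul_le_mul_of_nonneg_left k1 hl0.le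
        have k2' := mul_le_mul_of_nonneg_left k2 hl1'.le
        rw [hwi i] at k1' k2' ⊢
        nlinarith [k1', k2']
      have hmin' := hmin t w hwZ
      rw [← hxdef, ← hydef, ← hG] at hmin'
      have hinner : (inner ℝ G w : ℝ) = lam * (inner ℝ G x : ℝ) + (1 - lam) * (inner ℝ G y : ℝ) := by
        rw [hwdef, inner_add_right, real_inner_smul_right, real_inner_smul_right]
      have hhw : h w ≤ lam * h x + (1 - lam) * h y :=
        hhconv.2 (Set.mem_univ x) (Set.mem_univ y) hl0.le hl1'.le (by ring)
      have hβinv : (0:ℝ) < 1 / β := by positivity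
      have hDwβ := mul_le_mul_of_nonneg_left hDw hβinv.le
      have hfactor : (1 - lam) * ((inner ℝ G x : ℝ) + h x + (1 / β) * D x y +
          (lam / (2 * β)) * ‖x - y‖ ^ 2) ≤ (1 - lam) * ((inner ℝ G y : ℝ) + h y) := by
        have hcomb : (inner ℝ G x : ℝ) + h x + (1 / β) * D x y ≤
            lam * (inner ℝ G x : ℝ) + (1 - lam) * (inner ℝ G y : ℝ) + (lam * h x + (1 - lam) * h y) +
              (1 / β) * (lam * D x y - (lam * (1 - lam) / 2) * ‖x - y‖ ^ 2) := by
          calc (inner ℝ G x : ℝ) + h x + (1 / β) * D x y ≤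
              (inner ℝ G w : ℝ) + h w + (1 / β) * D w y := hmin'
            _ ≤ _ := by rw [hinner]; linarith
        have hβexp : (1:ℝ) / β * (lam * D x y - (lam * (1 - lam) / 2) * ‖x - y‖ ^ 2) =
            lam * ((1 / β) * D x y) - (lam * (1 - lam) / 2) * ((1/β) * ‖x - y‖ ^ 2) := by ring
        have hlamexp : (lam / (2 * β)) * ‖x - y‖ ^ 2 = (lam / 2) * ((1/β) * ‖x - y‖ ^ 2) := by
          field_simp
        rw [hβexp] at hcomb
        rw [hlamexp]
        linarith [hcomb]
      exact le_of_mul_le_mul_left (by linarith [hfactor]) hl1'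
    -- take the limit lam → 1⁻
    have hstep0 : (inner ℝ G x : ℝ) + h x + (1 / β) * D x y + (1 / (2 * β)) * ‖x - y‖ ^ 2 ≤
        (inner ℝ G y : ℝ) + h y := by
      have hcont : Filter.Tendsto
          (fun lam : ℝ => (inner ℝ G x : ℝ) + h x + (1 / β) * D x y +
            (lam / (2 * β)) * ‖x - y‖ ^ 2) (nhdsWithin 1 (Set.Iio 1))
          (nhds ((inner ℝ G x : ℝ) + h x + (1 / β) * D x y + ((1:ℝ) / (2 * β)) * ‖x - y‖ ^ 2)) := by
        apply Filter.Tendsto.mono_left _ nhdsWithin_le_nhds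
        have : Continuous (fun lam : ℝ => (inner ℝ G x : ℝ) + h x + (1 / β) * D x y +
            (lam / (2 * β)) * ‖x - y‖ ^ 2) := by continuity
        simpa using this.tendsto 1
      apply le_of_tendsto hcont
      filter_upwards [Ioo_mem_nhdsLT_of_mem (Set.mem_Ioc.2 ⟨zero_lt_one, le_refl (1:ℝ)⟩)] with lam hlm
      exact hlam lam hlm
    -- descent lemma
    have hdesc := descent_lemma f L hL hf hfL x y
    rw [← hG] at hdesc
    have hinnersub : (inner ℝ G (x - y) : ℝ) = (inner ℝ G x : ℝ) - (inner ℝ G y : ℝ) :=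
      inner_sub_right _ _ _
    rw [hinnersub] at hdesc
    have hβD := mul_le_mul_of_nonneg_left pinsker (by positivity : (0:ℝ) ≤ 1 / β)
    have hhalf : (1:ℝ) / β * (‖x - y‖ ^ 2 / 2) = (1 / (2 * β)) * ‖x - y‖ ^ 2 := by
      rw [one_div, one_div, mul_inv]; ring
    rw [hhalf] at hβD
    linarith [hstep0, hdesc, hβD]
  -- telescoping
  have tele : ∀ T : ℕ,
      (1 / β - L / 2) * ∑ t ∈ Finset.range T, ‖z (t + 1) - z t‖ ^ 2 +
        (f (z T) + h (z T)) ≤ f (z 0) + h (z 0) := by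
    intro T
    induction T with
    | zero => simp
    | succ T ih =>
      rw [Finset.sum_range_succ, mul_add]
      have := step T
      linarith
  intro T hT
  have hT0 : (0:ℝ) < (T : ℝ) := by exact_mod_cast hT
  set S := ∑ t ∈ Finset.range T, ‖z (t + 1) - z t‖ ^ 2 with hS
  set C := f (z 0) + h (z 0) - Fstar with hC
  have hsum : S ≤ C / (1 / β - L / 2) := by
    rw [le_div_iff₀ hc]
    have h1 := tele T
    have h2 := hFstar (z T) (hzZ T)
    nlinarith [h1, h2, hc]
  calc (1 / (T : ℝ)) * S = S / T := by ring
    _ ≤ (C / (1 / β - L / 2)) / T := by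
        exact div_le_div_of_nonneg_right hsum hT0.le
    _ = C / ((T : ℝ) * (1 / β - L / 2)) := by
        rw [div_div, mul_comm]
end

section
/- Let n be a positive natural number, λ ≥ 0, β > 0, c : Fin n → ℝ, and z₀ : Fin n → ℝ with z₀ i > 0 for all i. Define g on the open positive orthant {z : Fin n → ℝ | ∀ i, z i > 0} by g(z) = −(∑ i, c i * z i) + (λ + 1/β) * ∑ i, z i * Real.log (z i) − (1/β) * ∑ i, z i * Real.log (z₀ i). Then the point z⋆ given by z⋆ i = Real.exp ((β * c i + Real.log (z₀ i)) / (1 + λ * β) − 1) is the unique global minimizer of g on the positive orthant: g(z) > g(z⋆) for every z in the positive orthant with z ≠ z⋆. -/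
open Finset

lemma aux_le (m t : ℝ) (ht : 0 < t) :
    t * Real.log t - m * t ≥ -Real.exp (m - 1) := by
  have h := Real.add_one_le_exp (m - 1 - Real.log t)
  have hexp : Real.exp (m - 1 - Real.log t) = Real.exp (m - 1) / t := by
    rw [Real.exp_sub, Real.exp_log ht]
  rw [hexp] at h
  have h2 := mul_le_mul_of_nonneg_right h ht.le
  rw [div_mul_cancel₀ _ ht.ne'] at h2
  nlinarith

lemma aux_lt (m t : ℝ) (ht : 0 < t) (hne : t ≠ Real.exp (m - 1)) :
    t * Real.log t - m * t > -Real.exp (m - 1) := by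
  have hx : m - 1 - Real.log t ≠ 0 := by
    intro h0
    apply hne
    have : Real.log t = m - 1 := by linarith
    rw [← this, Real.exp_log ht]
  have h := (Real.add_one_lt_exp hx)
  have hexp : Real.exp (m - 1 - Real.log t) = Real.exp (m - 1) / t := by
    rw [Real.exp_sub, Real.exp_log ht]
  rw [hexp] at h
  have h2 := mul_lt_mul_of_pos_right h ht
  rw [div_mul_cancel₀ _ ht.ne'] at h2
  nlinarith

theorem stmt_7 (n : ℕ) (hn : 0 < n) (lam β : ℝ) (hlam : 0 ≤ lam) (hβ : 0 < β)
    (c z₀ : Fin n → ℝ) (hz₀ : ∀ i, 0 < z₀ i)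
    (g : (Fin n → ℝ) → ℝ)
    (hg : ∀ z, g z = -(∑ i, c i * z i) + (lam + 1 / β) * ∑ i, z i * Real.log (z i)
      - (1 / β) * ∑ i, z i * Real.log (z₀ i))
    (zstar : Fin n → ℝ)
    (hzstar : ∀ i, zstar i = Real.exp ((β * c i + Real.log (z₀ i)) / (1 + lam * β) - 1)) :
    ∀ z : Fin n → ℝ, (∀ i, 0 < z i) → z ≠ zstar → g z > g zstar := by
  intro z hz hne
  set a : ℝ := lam + 1 / β with ha_def
  have ha : 0 < a := by positivity
  set d : Fin n → ℝ := fun i => c i + (1 / β) * Real.log (z₀ i) with hd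
  have hrep : ∀ w : Fin n → ℝ, g w = ∑ i, (a * (w i * Real.log (w i)) - d i * w i) := by
    intro w
    rw [hg]
    have key : ∀ s : Finset (Fin n),
        ∑ i ∈ s, (a * (w i * Real.log (w i)) - d i * w i) =
        -(∑ i ∈ s, c i * w i) + a * ∑ i ∈ s, w i * Real.log (w i)
          - (1 / β) * ∑ i ∈ s, w i * Real.log (z₀ i) := by
      intro s
      induction s using Finset.induction_on with
      | empty => simp
      | insert _ _ hj ih =>
        rw [Finset.sum_insert hj, Finset.sum_insert hj, Finset.sum_insert hj,
          Finset.sum_insert hj, ih]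
        simp only [hd]
        ring
    exact (key Finset.univ).symm
  have h1 : (0 : ℝ) < 1 + lam * β := by positivity
  have hzs : ∀ i, zstar i = Real.exp (d i / a - 1) := by
    intro i
    rw [hzstar]
    congr 2
    simp only [hd]
    rw [div_eq_div_iff h1.ne' ha.ne', ha_def]
    field_simp
    ring
  have hlogzs : ∀ i, Real.log (zstar i) = d i / a - 1 := by
    intro i; rw [hzs i, Real.log_exp]
  have hzsval : ∀ i, a * (zstar i * Real.log (zstar i)) - d i * zstar i
      = -(a * Real.exp (d i / a - 1)) := by
    intro i
    rw [hlogzs i, hzs i]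
    field_simp
    ring
  have hterm_le : ∀ i, a * (zstar i * Real.log (zstar i)) - d i * zstar i
      ≤ a * (z i * Real.log (z i)) - d i * z i := by
    intro i
    rw [hzsval i]
    have h := aux_le (d i / a) (z i) (hz i)
    have h2 := mul_le_mul_of_nonneg_left h ha.le
    have hda : a * (d i / a) = d i := mul_div_cancel₀ _ ha.ne'
    have h4 : a * (d i / a * z i) = d i * z i := by
      rw [← mul_assoc, hda]
    have h3 : a * (z i * Real.log (z i) - d i / a * z i)
        = a * (z i * Real.log (z i)) - d i * z i := by
      rw [mul_sub, h4]
    linarith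
  obtain ⟨j, hj⟩ := Function.ne_iff.mp hne
  have hterm_lt : a * (zstar j * Real.log (zstar j)) - d j * zstar j
      < a * (z j * Real.log (z j)) - d j * z j := by
    rw [hzsval j]
    have hnej : z j ≠ Real.exp (d j / a - 1) := by rw [← hzs j]; exact hj
    have h := aux_lt (d j / a) (z j) (hz j) hnej
    have h2 := mul_lt_mul_of_pos_left h ha
    have hda : a * (d j / a) = d j := mul_div_cancel₀ _ ha.ne'
    have h4 : a * (d j / a * z j) = d j * z j := by
      rw [← mul_assoc, hda]
    have h3 : a * (z j * Real.log (z j) - d j / a * z j)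
        = a * (z j * Real.log (z j)) - d j * z j := by
      rw [mul_sub, h4]
    linarith
  rw [hrep z, hrep zstar]
  exact Finset.sum_lt_sum (fun i _ => hterm_le i) ⟨j, Finset.mem_univ j, hterm_lt⟩
end

section
/- Let S be a nonempty finite type and E : S → ℝ. For λ > 0 define the Gibbs probability p λ x = Real.exp (−E x / λ) / ∑ y, Real.exp (−E y / λ). Let A = {y : S | E y = ⨅ y, E y} be the set of minimizers of E and let k = A.toFinset.card. Then for every x : S, as λ → 0 from the right (filter nhdsWithin 0 (Set.Ioi 0)), p λ x tends to 1/k if x ∈ A and tends to 0 if x ∉ A. In other words, the Gibbs distribution converges to the uniform distribution on the set of global minimizers of E. -/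
open Finset Filter

theorem stmt_9 {S : Type*} [Fintype S] [Nonempty S] (E : S → ℝ)
    (p : ℝ → S → ℝ)
    (hp : ∀ lam > (0 : ℝ), ∀ x, p lam x = Real.exp (-E x / lam) / ∑ y, Real.exp (-E y / lam))
    (A : Set S) (hA : A = {y : S | E y = ⨅ y, E y})
    (k : ℕ) (hk : k = A.ncard) (x : S) :
    (x ∈ A → Tendsto (fun lam => p lam x) (nhdsWithin 0 (Set.Ioi 0)) (nhds (1 / (k : ℝ)))) ∧
    (x ∉ A → Tendsto (fun lam => p lam x) (nhdsWithin 0 (Set.Ioi 0)) (nhds 0)) := by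
  classical
  obtain ⟨x₀, hx₀⟩ : ∃ x₀ : S, ∀ y, E x₀ ≤ E y := Finite.exists_min E
  set m := ⨅ y, E y with hmdef
  have hbdd : BddBelow (Set.range E) := Set.Finite.bddBelow (Set.finite_range E)
  have hmx0 : m = E x₀ := le_antisymm (ciInf_le hbdd x₀) (le_ciInf hx₀)
  have hle : ∀ y, m ≤ E y := fun y => hmx0 ▸ hx₀ y
  have hA' : A = {y | E y = m} := hA
  -- k as a filtered card
  have hAfin : A.toFinset = Finset.univ.filter (fun y => E y = m) := by
    ext y; simp [hA']
  have hkcard : k = (Finset.univ.filter (fun y => E y = m)).card := by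
    rw [hk, Set.ncard_eq_toFinset_card', hAfin]
  have hk0 : (k : ℝ) ≠ 0 := by
    have : x₀ ∈ Finset.univ.filter (fun y => E y = m) := by
      simp [hmx0]
    have hpos : 0 < k := hkcard ▸ Finset.card_pos.mpr ⟨x₀, this⟩
    exact_mod_cast hpos.ne'
  have hksum : (k : ℝ) = ∑ y : S, (if E y = m then (1:ℝ) else 0) := by
    rw [Finset.sum_boole, hkcard]
  -- limits of individual terms
  have hinv : Tendsto (fun lam : ℝ => lam⁻¹) (nhdsWithin 0 (Set.Ioi 0)) atTop :=
    tendsto_inv_nhdsGT_zero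
  have hterm : ∀ y : S, Tendsto (fun lam => Real.exp (-(E y - m) / lam))
      (nhdsWithin 0 (Set.Ioi 0)) (nhds (if E y = m then (1:ℝ) else 0)) := by
    intro y
    by_cases h : E y = m
    · simp only [h, sub_self, neg_zero, zero_div, Real.exp_zero, if_pos rfl]
      exact tendsto_const_nhds
    · simp only [h, if_false]
      have hc : (0:ℝ) < E y - m := sub_pos.mpr (lt_of_le_of_ne (hle y) (Ne.symm h))
      have hbot : Tendsto (fun lam : ℝ => -(E y - m) / lam)
          (nhdsWithin 0 (Set.Ioi 0)) atBot := by
        have := hinv.const_mul_atTop_of_neg (neg_neg_of_pos hc)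
        simpa [div_eq_mul_inv] using this
      exact Real.tendsto_exp_atBot.comp hbot
  have hden : Tendsto (fun lam => ∑ y : S, Real.exp (-(E y - m) / lam))
      (nhdsWithin 0 (Set.Ioi 0)) (nhds (k : ℝ)) := by
    rw [hksum]
    exact tendsto_finset_sum _ (fun y _ => hterm y)
  have hquot : Tendsto
      (fun lam => Real.exp (-(E x - m) / lam) / ∑ y : S, Real.exp (-(E y - m) / lam))
      (nhdsWithin 0 (Set.Ioi 0)) (nhds ((if E x = m then (1:ℝ) else 0) / k)) :=
    (hterm x).div hden hk0
  -- identify p with the shifted quotient on the filter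
  have heq : ∀ᶠ lam in nhdsWithin 0 (Set.Ioi 0), p lam x =
      Real.exp (-(E x - m) / lam) / ∑ y : S, Real.exp (-(E y - m) / lam) := by
    filter_upwards [self_mem_nhdsWithin] with lam hlam
    have hlam' : (0:ℝ) < lam := hlam
    rw [hp lam hlam' x]
    have hexp : ∀ y : S, Real.exp (-(E y - m) / lam)
        = Real.exp (-E y / lam) * Real.exp (m / lam) := by
      intro y
      rw [← Real.exp_add]
      congr 1
      field_simp
      ring
    have hsum : (∑ y : S, Real.exp (-(E y - m) / lam))
        = (∑ y : S, Real.exp (-E y / lam)) * Real.exp (m / lam) := by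
      rw [Finset.sum_mul]
      exact Finset.sum_congr rfl (fun y _ => hexp y)
    rw [hexp x, hsum, mul_div_mul_right _ _ (Real.exp_ne_zero _)]
  constructor
  · intro hx
    have hxm : E x = m := by rwa [hA'] at hx
    have := hquot.congr' (heq.mono fun _ h => h.symm)
    simpa [hxm] using this
  · intro hx
    have hxm : E x ≠ m := by
      intro h; exact hx (by rw [hA']; exact h)
    have := hquot.congr' (heq.mono fun _ h => h.symm)
    simpa [hxm] using this
end
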